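/- Let m, u, v ∈ ℕ and let A be a u × v matrix with rational entries such that for each a ∈ ℤ there exists x⃗ ∈ ℤ^v with A x⃗ = (a, a, ..., a) ∈ ℤ^u. If B ⊆ ℤ is an mu-CR-set, then C = {y⃗ ∈ ℤ^v : A y⃗ ∈ B^u} is an m-CR-set in (ℤ^v, +). -/

import Mathlib

/-- `A` is a `k`-CR-set in the commutative semigroup `S`. -/
def kCRSet {S : Type*} [AddCommMonoid S] (k : ℕ) (A : Set S) : Prop :=
  ∃ r : ℕ, ∀ F : Finset (ℕ → S), F.card ≤ k →
    ∃ (a : S) (H : Finset ℕ), H.Nonempty ∧ H ⊆ Finset.Icc 1 r ∧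
      ∀ f ∈ F, a + ∑ t ∈ H, f t ∈ A

/-- if `A` is a `u × v` rational matrix whose image contains every
constant integer vector, and `B ⊆ ℤ` is an `m*u`-CR-set, then
`{y ∈ ℤ^v : A y ∈ B^u}` is an `m`-CR-set in `ℤ^v`. -/
theorem stmt8 (m u v : ℕ) (A : Matrix (Fin u) (Fin v) ℚ)
    (hA : ∀ a : ℤ, ∃ x : Fin v → ℤ,
      ∀ i : Fin u, A.mulVec (fun j => (x j : ℚ)) i = (a : ℚ))
    (B : Set ℤ) (hB : kCRSet (m * u) B) :
    kCRSet m {y : Fin v → ℤ |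
      ∀ i : Fin u, ∃ b ∈ B, A.mulVec (fun j => (y j : ℚ)) i = (b : ℚ)} := by
  classical
  obtain ⟨r₀, hr₀⟩ := hB
  -- common denominator
  set D : ℕ := ∏ i : Fin u, ∏ j : Fin v, (A i j).den with hDdef
  have hDpos : 0 < D :=
    Finset.prod_pos fun i _ => Finset.prod_pos fun j _ => (A i j).pos
  haveI : NeZero D := ⟨hDpos.ne'⟩
  have hDQ : (D : ℚ) ≠ 0 := by exact_mod_cast hDpos.ne'
  -- integer matrix M with (M i j : ℚ) = D * A i j
  have hM : ∀ i j, ∃ z : ℤ, (z : ℚ) = (D : ℚ) * A i j := by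
    intro i j
    have hdvd : (A i j).den ∣ D := by
      refine dvd_trans (Finset.dvd_prod_of_mem (fun j' => (A i j').den)
        (Finset.mem_univ j)) ?_
      exact Finset.dvd_prod_of_mem (fun i' => ∏ j', (A i' j').den)
        (Finset.mem_univ i)
    obtain ⟨k, hk⟩ := hdvd
    refine ⟨(A i j).num * k, ?_⟩
    have hq : A i j * ((A i j).den : ℚ) = ((A i j).num : ℚ) :=
      Rat.mul_den_eq_num _
    rw [hk]
    push_cast
    rw [← hq]
    ring
  choose M hMspec using hM
  set N : Matrix (Fin u) (Fin v) ℤ := Matrix.of M with hNdef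
  have hmul : ∀ (y : Fin v → ℤ) (i : Fin u),
      ((N.mulVec y i : ℤ) : ℚ) = (D : ℚ) * A.mulVec (fun j => (y j : ℚ)) i := by
    intro y i
    simp only [Matrix.mulVec, dotProduct, Finset.mul_sum]
    push_cast
    refine Finset.sum_congr rfl fun j _ => ?_
    have hN : ((N i j : ℤ) : ℚ) = (D : ℚ) * A i j := hMspec i j
    rw [hN]; ring
  set P : ℕ := D ^ (u * m) with hPdef
  have hPpos : 0 < P := pow_pos hDpos _
  refine ⟨(r₀ + 1) * P, fun F hF => ?_⟩
  -- partial sums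
  set S : (ℕ → Fin v → ℤ) → ℕ → Fin v → ℤ :=
    fun f n => ∑ s ∈ Finset.Ioc 0 n, f s with hSdef
  -- class map
  set c : ℕ → (↥F → Fin u → ZMod D) :=
    fun n f i => ((N.mulVec (S (f : ℕ → Fin v → ℤ) n) i : ℤ) : ZMod D) with hcdef
  -- pigeonhole on {0, ..., (r₀+1)*P}
  have hcard : Fintype.card (↥F → Fin u → ZMod D) * r₀ <
      (Finset.range ((r₀ + 1) * P + 1)).card := by
    rw [Finset.card_range, Fintype.card_fun, Fintype.card_fun, Fintype.card_coe,
      ZMod.card, Fintype.card_fin, ← pow_mul]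
    have h1 : D ^ (u * F.card) ≤ P := by
      rw [hPdef]
      exact Nat.pow_le_pow_right hDpos (Nat.mul_le_mul_left _ hF)
    calc D ^ (u * F.card) * r₀ ≤ P * r₀ := Nat.mul_le_mul_right _ h1
      _ < P * r₀ + P := by omega
      _ = (r₀ + 1) * P := by ring
      _ < (r₀ + 1) * P + 1 := by omega
  obtain ⟨b, -, hbfib⟩ :=
    Finset.exists_lt_card_fiber_of_mul_lt_card_of_maps_to
      (fun a _ => Finset.mem_univ (c a)) hcard
  obtain ⟨T, hTsub, hTcard⟩ := Finset.exists_subset_card_eq hbfib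
  set e : Fin (r₀ + 1) ↪o ℕ := T.orderEmbOfFin hTcard with hedef
  set e' : ℕ → ℕ := fun t => e ⟨min t r₀, Nat.lt_succ_of_le (min_le_right _ _)⟩
    with he'def
  have he'mem : ∀ t, e' t ∈ T := fun t => Finset.orderEmbOfFin_mem _ _ _
  have he'class : ∀ t, c (e' t) = b := by
    intro t
    have := hTsub (he'mem t)
    simp only [Finset.mem_filter] at this
    exact this.2
  have he'le : ∀ t, e' t ≤ (r₀ + 1) * P := by
    intro t
    have := hTsub (he'mem t)
    simp only [Finset.mem_filter, Finset.mem_range] at this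
    omega
  have he'mono : Monotone e' := by
    intro a₁ a₂ h12
    exact e.monotone (by simp only [Fin.mk_le_mk]; omega)
  have he'strict : ∀ t, 1 ≤ t → t ≤ r₀ → e' (t - 1) < e' t := by
    intro t h1 h2
    refine e.strictMono ?_
    simp only [Fin.mk_lt_mk]; omega
  -- divisibility of block sums
  have hdiv : ∀ f : ℕ → Fin v → ℤ, f ∈ F → ∀ (i : Fin u) (t : ℕ),
      (D : ℤ) ∣ N.mulVec (S f (e' t) - S f (e' (t - 1))) i := by
    intro f hf i t
    have h1 : c (e' t) = c (e' (t - 1)) := by rw [he'class, he'class]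
    have h2 : ((N.mulVec (S f (e' t)) i : ℤ) : ZMod D)
        = ((N.mulVec (S f (e' (t - 1))) i : ℤ) : ZMod D) :=
      congrFun (congrFun h1 ⟨f, hf⟩) i
    have h3 := ((ZMod.intCast_eq_intCast_iff _ _ _).mp h2.symm).dvd
    rw [Matrix.mulVec_sub]
    exact h3
  -- integer sequences
  set g : (ℕ → Fin v → ℤ) → Fin u → ℕ → ℤ :=
    fun f i t => N.mulVec (S f (e' t) - S f (e' (t - 1))) i / (D : ℤ) with hgdef
  have hgval : ∀ f : ℕ → Fin v → ℤ, f ∈ F → ∀ (i : Fin u) (t : ℕ),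
      ((g f i t : ℤ) : ℚ)
        = A.mulVec (fun j => (((S f (e' t) - S f (e' (t - 1))) j : ℤ) : ℚ)) i := by
    intro f hf i t
    obtain ⟨w, hw⟩ := hdiv f hf i t
    have hDz : (D : ℤ) ≠ 0 := by exact_mod_cast hDpos.ne'
    have hg : g f i t = w := by
      simp only [hgdef]
      rw [hw, Int.mul_ediv_cancel_left _ hDz]
    have h2 := hmul (S f (e' t) - S f (e' (t - 1))) i
    rw [hw] at h2
    push_cast at h2
    rw [hg]
    exact mul_left_cancel₀ hDQ h2
  -- apply hB
  set G : Finset (ℕ → ℤ) :=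
    Finset.image (fun p : ↥F × Fin u => g (p.1 : ℕ → Fin v → ℤ) p.2)
      Finset.univ with hGdef
  have hGcard : G.card ≤ m * u := by
    calc G.card ≤ (Finset.univ : Finset (↥F × Fin u)).card := Finset.card_image_le
      _ = F.card * u := by
          rw [Finset.card_univ, Fintype.card_prod, Fintype.card_coe, Fintype.card_fin]
      _ ≤ m * u := Nat.mul_le_mul_right _ hF
  obtain ⟨bz, H, hHne, hHsub, hHmem⟩ := hr₀ G hGcard
  obtain ⟨x, hx⟩ := hA bz
  set H' : Finset ℕ := H.biUnion (fun t => Finset.Ioc (e' (t - 1)) (e' t)) with hH'def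
  have hIcc : ∀ t ∈ H, 1 ≤ t ∧ t ≤ r₀ := by
    intro t ht
    have := hHsub ht
    simp only [Finset.mem_Icc] at this
    exact this
  refine ⟨x, H', ?_, ?_, ?_⟩
  · obtain ⟨t, ht⟩ := hHne
    obtain ⟨h1, h2⟩ := hIcc t ht
    refine ⟨e' t, Finset.mem_biUnion.mpr ⟨t, ht, ?_⟩⟩
    simp only [Finset.mem_Ioc]
    exact ⟨he'strict t h1 h2, le_rfl⟩
  · intro s hs
    obtain ⟨t, ht, hst⟩ := Finset.mem_biUnion.mp hs
    simp only [Finset.mem_Ioc] at hst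
    simp only [Finset.mem_Icc]
    exact ⟨by omega, le_trans hst.2 (he'le t)⟩
  · intro f hf
    have key : ∀ a₁ a₂ : ℕ, a₁ ∈ H → a₂ ∈ H → a₁ < a₂ →
        Disjoint (Finset.Ioc (e' (a₁ - 1)) (e' a₁))
          (Finset.Ioc (e' (a₂ - 1)) (e' a₂)) := by
      intro a₁ a₂ ha₁ ha₂ hlt
      rw [Finset.disjoint_left]
      intro s hs1 hs2
      simp only [Finset.mem_Ioc] at hs1 hs2
      have h1 : e' a₁ ≤ e' (a₂ - 1) := he'mono (by omega)
      omega
    have hdisj : (↑H : Set ℕ).PairwiseDisjoint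
        (fun t => Finset.Ioc (e' (t - 1)) (e' t)) := by
      intro a₁ ha₁ a₂ ha₂ hne
      rcases lt_or_gt_of_ne hne with hlt | hlt
      · exact key a₁ a₂ (Finset.mem_coe.mp ha₁) (Finset.mem_coe.mp ha₂) hlt
      · exact (key a₂ a₁ (Finset.mem_coe.mp ha₂) (Finset.mem_coe.mp ha₁) hlt).symm
    have hsum : ∑ s ∈ H', f s = ∑ t ∈ H, (S f (e' t) - S f (e' (t - 1))) := by
      rw [hH'def, Finset.sum_biUnion hdisj]
      refine Finset.sum_congr rfl fun t ht => ?_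
      obtain ⟨h1, h2⟩ := hIcc t ht
      have hle : e' (t - 1) ≤ e' t := he'mono (by omega)
      have hcons := Finset.sum_Ioc_consecutive f (Nat.zero_le (e' (t - 1))) hle
      simp only [hSdef]
      exact eq_sub_of_add_eq' hcons
    simp only [Set.mem_setOf_eq]
    intro i
    refine ⟨bz + ∑ t ∈ H, g f i t,
      hHmem _ (Finset.mem_image.mpr ⟨(⟨f, hf⟩, i), Finset.mem_univ _, rfl⟩), ?_⟩
    have hc1 : (fun j => (((x + ∑ s ∈ H', f s) j : ℤ) : ℚ))
        = (fun j => ((x j : ℤ) : ℚ)) + fun j => (((∑ s ∈ H', f s) j : ℤ) : ℚ) := by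
      funext j
      simp only [Pi.add_apply]
      push_cast
      ring
    rw [hc1, Matrix.mulVec_add, Pi.add_apply, hx]
    have hc2 : (fun j => (((∑ s ∈ H', f s) j : ℤ) : ℚ))
        = ∑ t ∈ H, (fun j => (((S f (e' t) - S f (e' (t - 1))) j : ℤ) : ℚ)) := by
      funext j
      rw [hsum]
      simp only [Finset.sum_apply]
      push_cast
      rfl
    rw [hc2]
    have hc3 : A.mulVec (∑ t ∈ H,
          (fun j => (((S f (e' t) - S f (e' (t - 1))) j : ℤ) : ℚ))) i
        = ∑ t ∈ H, A.mulVec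
          (fun j => (((S f (e' t) - S f (e' (t - 1))) j : ℤ) : ℚ)) i := by
      rw [← Matrix.mulVecLin_apply, map_sum, Finset.sum_apply]
      simp only [Matrix.mulVecLin_apply]
    rw [hc3]
    have hc4 : ∑ t ∈ H, A.mulVec
          (fun j => (((S f (e' t) - S f (e' (t - 1))) j : ℤ) : ℚ)) i
        = ∑ t ∈ H, ((g f i t : ℤ) : ℚ) :=
      Finset.sum_congr rfl fun t _ => (hgval f hf i t).symm
    rw [hc4]
    push_cast
    ring
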